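/- arXiv:1112.6172 — 3 statements merged into one kernel-verified Lean document; each statement's English description precedes it below -/
import Mathlib

section
/- For every two finite simple graphs G and H, the independence ratio of the categorical product satisfies i(G × H) ≤ max{a(G), a(H)}, where i(K) = α(K)/|V(K)| and a(K) = max{|U|/(|U| + |N_K(U)|) : U a nonempty independent set of K}. -/
open scoped Classical
open Filter

/-- Categorical (tensor) product of two simple graphs. -/
def tensorProd {α β : Type*} (G : SimpleGraph α) (H : SimpleGraph β) :
    SimpleGraph (α × β) where
  Adj p q := G.Adj p.1 q.1 ∧ H.Adj p.2 q.2
  symm := ⟨fun p q h => ⟨h.1.symm, h.2.symm⟩⟩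
  loopless := ⟨fun p h => G.irrefl h.1⟩

/-- A finset is independent. -/
def IsIndep {α : Type*} (G : SimpleGraph α) (U : Finset α) : Prop :=
  ∀ u ∈ U, ∀ v ∈ U, ¬ G.Adj u v

/-- Neighborhood of a finset. -/
noncomputable def nbhd {α : Type*} [Fintype α] (G : SimpleGraph α) (U : Finset α) : Finset α :=
  Finset.univ.filter (fun v => ∃ u ∈ U, G.Adj u v)

/-- Independence number. -/
noncomputable def alphaNum {α : Type*} [Fintype α] (G : SimpleGraph α) : ℕ :=
  sSup {n : ℕ | ∃ U : Finset α, IsIndep G U ∧ U.card = n}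

/-- Independence ratio. -/
noncomputable def iRatio {α : Type*} [Fintype α] (G : SimpleGraph α) : ℝ :=
  (alphaNum G : ℝ) / (Fintype.card α : ℝ)

/-- a(G): the maximum of |U|/(|U|+|N(U)|) over nonempty independent sets. -/
noncomputable def aRatio {α : Type*} [Fintype α] (G : SimpleGraph α) : ℝ :=
  sSup {r : ℝ | ∃ U : Finset α, U.Nonempty ∧ IsIndep G U ∧
    r = (U.card : ℝ) / ((U.card : ℝ) + ((nbhd G U).card : ℝ))}

/-- b(G): the minimum of |N(U)|/|U| over nonempty independent sets. -/
noncomputable def bRatio {α : Type*} [Fintype α] (G : SimpleGraph α) : ℝ :=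
  sInf {r : ℝ | ∃ U : Finset α, U.Nonempty ∧ IsIndep G U ∧
    r = ((nbhd G U).card : ℝ) / (U.card : ℝ)}

/-- a*(G). -/
noncomputable def aStar {α : Type*} [Fintype α] (G : SimpleGraph α) : ℝ :=
  if aRatio G ≤ 1/2 then aRatio G else 1

/-- k-th categorical power of G. -/
def tensorPow {α : Type*} (G : SimpleGraph α) (k : ℕ) : SimpleGraph (Fin k → α) where
  Adj x y := x ≠ y ∧ ∀ i, G.Adj (x i) (y i)
  symm := ⟨fun x y h => ⟨h.1.symm, fun i => (h.2 i).symm⟩⟩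
  loopless := ⟨fun x h => h.1 rfl⟩

/-- Disjoint union of two simple graphs. -/
def disjUnion {α β : Type*} (G : SimpleGraph α) (H : SimpleGraph β) :
    SimpleGraph (α ⊕ β) where
  Adj p q := match p, q with
    | Sum.inl a, Sum.inl b => G.Adj a b
    | Sum.inr a, Sum.inr b => H.Adj a b
    | _, _ => False
  symm := ⟨by rintro (a|a) (b|b) h <;> simp_all <;> exact h.symm⟩
  loopless := ⟨by rintro (a|a) h <;> simp_all⟩


section Stmt2Aux

open Finset

variable {γ : Type*}

lemma mem_nbhd' [Fintype γ] (G : SimpleGraph γ) (U : Finset γ) (v : γ) :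
    v ∈ nbhd G U ↔ ∃ u ∈ U, G.Adj u v := by
  simp [nbhd]

lemma nbhd_mono [Fintype γ] (G : SimpleGraph γ) {U V : Finset γ} (h : U ⊆ V) :
    nbhd G U ⊆ nbhd G V := by
  intro v hv
  rw [mem_nbhd'] at hv ⊢
  obtain ⟨u, hu, hadj⟩ := hv
  exact ⟨u, h hu, hadj⟩

lemma aux_bddAbove [Fintype γ] (G : SimpleGraph γ) :
    BddAbove {r : ℝ | ∃ U : Finset γ, U.Nonempty ∧ IsIndep G U ∧
      r = (U.card : ℝ) / ((U.card : ℝ) + ((nbhd G U).card : ℝ))} := by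
  refine ⟨1, ?_⟩
  rintro r ⟨U, hne, _, rfl⟩
  have h1 : (1:ℝ) ≤ (U.card : ℝ) := by exact_mod_cast hne.card_pos
  have h2 : (0:ℝ) ≤ ((nbhd G U).card : ℝ) := by positivity
  rw [div_le_one (by linarith)]
  linarith

lemma aRatio_nonneg' [Fintype γ] [Nonempty γ] (G : SimpleGraph γ) :
    0 ≤ aRatio G := by
  obtain ⟨v⟩ := (inferInstance : Nonempty γ)
  have hind : IsIndep G {v} := by
    intro u hu w hw
    simp only [Finset.mem_singleton] at hu hw
    rw [hu, hw]
    exact G.irrefl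
  have hmem : ((({v} : Finset γ).card : ℝ) /
      ((({v} : Finset γ).card : ℝ) + ((nbhd G {v}).card : ℝ))) ∈
      {r : ℝ | ∃ U : Finset γ, U.Nonempty ∧ IsIndep G U ∧
        r = (U.card : ℝ) / ((U.card : ℝ) + ((nbhd G U).card : ℝ))} :=
    ⟨{v}, Finset.singleton_nonempty v, hind, rfl⟩
  have := le_csSup (aux_bddAbove G) hmem
  have h0 : (0:ℝ) ≤ (({v} : Finset γ).card : ℝ) /
      ((({v} : Finset γ).card : ℝ) + ((nbhd G {v}).card : ℝ)) := by positivity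
  exact h0.trans this

lemma key_ineq [Fintype γ] (G : SimpleGraph γ) {t : ℝ} (h : aRatio G ≤ t) (ht0 : 0 ≤ t)
    (U : Finset γ) (hU : IsIndep G U) :
    (1 - t) * (U.card : ℝ) ≤ t * ((nbhd G U).card : ℝ) := by
  rcases U.eq_empty_or_nonempty with rfl | hne
  · simp only [Finset.card_empty, Nat.cast_zero, mul_zero]
    positivity
  · have hmem : ((U.card : ℝ) / ((U.card : ℝ) + ((nbhd G U).card : ℝ))) ∈
        {r : ℝ | ∃ U' : Finset γ, U'.Nonempty ∧ IsIndep G U' ∧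
          r = (U'.card : ℝ) / ((U'.card : ℝ) + ((nbhd G U').card : ℝ))} :=
      ⟨U, hne, hU, rfl⟩
    have hle : ((U.card : ℝ) / ((U.card : ℝ) + ((nbhd G U).card : ℝ))) ≤ t :=
      (le_csSup (aux_bddAbove G) hmem).trans h
    have hc : (0:ℝ) < (U.card : ℝ) := by exact_mod_cast hne.card_pos
    have hn : (0:ℝ) ≤ ((nbhd G U).card : ℝ) := by positivity
    have hd : (0:ℝ) < (U.card : ℝ) + ((nbhd G U).card : ℝ) := by linarith
    have := (div_le_iff₀ hd).mp hle
    nlinarith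

variable {α β : Type*}

/-- Column of `K` over `x`. -/
noncomputable def icol [Fintype β] (K : Finset (α × β)) (x : α) : Finset β :=
  Finset.univ.filter fun y => (x, y) ∈ K

lemma mem_icol [Fintype β] (K : Finset (α × β)) (x : α) (y : β) :
    y ∈ icol K x ↔ (x, y) ∈ K := by simp [icol]

/-- Non-isolated part of the column. -/
noncomputable def wpart [Fintype β] (H : SimpleGraph β) (K : Finset (α × β)) (x : α) :
    Finset β :=
  (icol K x).filter fun y => ∃ z ∈ icol K x, H.Adj y z

/-- Isolated part of the column. -/
noncomputable def upart [Fintype β] (H : SimpleGraph β) (K : Finset (α × β)) (x : α) :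
    Finset β :=
  (icol K x).filter fun y => ¬ ∃ z ∈ icol K x, H.Adj y z

/-- Row set `T(y)`. -/
noncomputable def tset [Fintype α] [Fintype β] (H : SimpleGraph β) (K : Finset (α × β))
    (y : β) : Finset α :=
  Finset.univ.filter fun x => y ∈ wpart H K x

/-- Row set `P̄(y)`. -/
noncomputable def pset [Fintype α] [Fintype β] (H : SimpleGraph β) (K : Finset (α × β))
    (y : β) : Finset α :=
  Finset.univ.filter fun x => y ∈ icol K x ∪ nbhd H (icol K x)

lemma sum_card_filter_swap [Fintype α] [Fintype β] (f : α → Finset β) :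
    ∑ y : β, (Finset.univ.filter fun x => y ∈ f x).card = ∑ x : α, (f x).card := by
  simp only [Finset.card_filter]
  rw [Finset.sum_comm]
  congr 1
  ext x
  rw [← Finset.card_filter]
  congr 1
  ext y
  simp

lemma card_eq_sum_icol [Fintype α] [Fintype β] (K : Finset (α × β)) :
    ∑ x : α, (icol K x).card = K.card := by
  classical
  simp only [icol, Finset.card_filter]
  rw [← Finset.sum_product']
  rw [Finset.univ_product_univ]
  rw [← Finset.card_filter]
  congr 1
  ext p
  simp

end Stmt2Aux

open Finset in
lemma stmt2_main {α β : Type*} [Fintype α] [Fintype β] [Nonempty α] [Nonempty β]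
    (G : SimpleGraph α) (H : SimpleGraph β) {t : ℝ}
    (htG : aRatio G ≤ t) (htH : aRatio H ≤ t) (ht0 : 0 ≤ t)
    (K : Finset (α × β)) (hK : IsIndep (tensorProd G H) K) :
    (K.card : ℝ) ≤ t * (Fintype.card α : ℝ) * (Fintype.card β : ℝ) := by
  classical
  set n1 : ℝ := (Fintype.card α : ℝ) with hn1
  set n2 : ℝ := (Fintype.card β : ℝ) with hn2
  -- T(y) is independent in G
  have hTind : ∀ y : β, IsIndep G (tset H K y) := by
    intro y x1 hx1 x2 hx2 hadj
    simp only [tset, Finset.mem_filter, Finset.mem_univ, true_and, wpart, mem_icol] at hx1 hx2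
    obtain ⟨hy1, z, hz, hyz⟩ := hx1
    obtain ⟨hy2, -⟩ := hx2
    exact hK (x1, z) hz (x2, y) hy2 ⟨hadj, hyz.symm⟩
  -- N_G(T(y)) disjoint from P̄(y)
  have hTdisj : ∀ y : β, Disjoint (nbhd G (tset H K y)) (pset H K y) := by
    intro y
    rw [Finset.disjoint_left]
    intro x' hx' hxP
    rw [mem_nbhd'] at hx'
    obtain ⟨x, hx, hGxx'⟩ := hx'
    simp only [tset, Finset.mem_filter, Finset.mem_univ, true_and, wpart, mem_icol] at hx
    obtain ⟨hy, z0, hz0, hyz0⟩ := hx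
    simp only [pset, Finset.mem_filter, Finset.mem_univ, true_and, Finset.mem_union,
      mem_icol, mem_nbhd'] at hxP
    rcases hxP with h1 | h2
    · exact hK (x, z0) hz0 (x', y) h1 ⟨hGxx', hyz0.symm⟩
    · obtain ⟨z, hz, hzy⟩ := h2
      exact hK (x, y) hy (x', z) hz ⟨hGxx', hzy.symm⟩
  -- per-y inequality
  have h3 : ∀ y : β, (1 - t) * ((tset H K y).card : ℝ) + t * ((pset H K y).card : ℝ)
      ≤ t * n1 := by
    intro y
    have h1 := key_ineq G htG ht0 (tset H K y) (hTind y)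
    have h2 : (nbhd G (tset H K y)).card + (pset H K y).card ≤ Fintype.card α := by
      rw [← Finset.card_union_of_disjoint (hTdisj y)]
      exact (Finset.card_le_univ _).trans_eq Finset.card_univ
    have h2R : ((nbhd G (tset H K y)).card : ℝ) ≤ n1 - ((pset H K y).card : ℝ) := by
      rw [hn1]
      have : ((nbhd G (tset H K y)).card : ℝ) + ((pset H K y).card : ℝ)
          ≤ (Fintype.card α : ℝ) := by exact_mod_cast h2
      linarith
    nlinarith [mul_le_mul_of_nonneg_left h2R ht0]
  -- per-x facts
  have hUind : ∀ x : α, IsIndep H (upart H K x) := by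
    intro x u1 h1 u2 h2 hadj
    simp only [upart, Finset.mem_filter] at h1 h2
    exact h1.2 ⟨u2, h2.1, hadj⟩
  have hUdisj : ∀ x : α, Disjoint (icol K x) (nbhd H (upart H K x)) := by
    intro x
    rw [Finset.disjoint_left]
    intro v hv hvn
    rw [mem_nbhd'] at hvn
    obtain ⟨u, hu, huv⟩ := hvn
    simp only [upart, Finset.mem_filter] at hu
    exact hu.2 ⟨v, hv, huv⟩
  have h6 : ∀ x : α, t * ((icol K x).card : ℝ) + (1 - t) * ((upart H K x).card : ℝ)
      ≤ t * (((icol K x ∪ nbhd H (icol K x)).card : ℝ)) := by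
    intro x
    have hkeyH := key_ineq H htH ht0 (upart H K x) (hUind x)
    have hsub : icol K x ∪ nbhd H (upart H K x) ⊆ icol K x ∪ nbhd H (icol K x) :=
      Finset.union_subset_union_right (nbhd_mono H (Finset.filter_subset _ _))
    have hcard : (icol K x).card + (nbhd H (upart H K x)).card
        ≤ (icol K x ∪ nbhd H (icol K x)).card := by
      rw [← Finset.card_union_of_disjoint (hUdisj x)]
      exact Finset.card_le_card hsub
    have hcardR : ((icol K x).card : ℝ) + ((nbhd H (upart H K x)).card : ℝ)
        ≤ ((icol K x ∪ nbhd H (icol K x)).card : ℝ) := by exact_mod_cast hcard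
    nlinarith [mul_le_mul_of_nonneg_left hcardR ht0]
  -- double counting
  have hswapT : ∑ y : β, ((tset H K y).card : ℝ) = ∑ x : α, ((wpart H K x).card : ℝ) := by
    have := sum_card_filter_swap (fun x => wpart H K x)
    simp only [tset] at *
    exact_mod_cast this
  have hswapP : ∑ y : β, ((pset H K y).card : ℝ)
      = ∑ x : α, (((icol K x ∪ nbhd H (icol K x)).card : ℝ)) := by
    have := sum_card_filter_swap (fun x => icol K x ∪ nbhd H (icol K x))
    simp only [pset] at *
    exact_mod_cast this
  have hcardK : ∑ x : α, ((icol K x).card : ℝ) = (K.card : ℝ) := by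
    exact_mod_cast congrArg (Nat.cast : ℕ → ℝ) (card_eq_sum_icol K)
  have hsplit : ∀ x : α, ((wpart H K x).card : ℝ) + ((upart H K x).card : ℝ)
      = ((icol K x).card : ℝ) := by
    intro x
    have := Finset.card_filter_add_card_filter_not
      (s := icol K x) (p := fun y => ∃ z ∈ icol K x, H.Adj y z)
    exact_mod_cast this
  -- sum the per-y inequality
  have hsum3 : (1 - t) * (∑ y : β, ((tset H K y).card : ℝ))
      + t * (∑ y : β, ((pset H K y).card : ℝ)) ≤ t * n1 * n2 := by
    have := Finset.sum_le_sum (fun y (_ : y ∈ Finset.univ) => h3 y)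
    rw [Finset.sum_add_distrib, ← Finset.mul_sum, ← Finset.mul_sum] at this
    simp only [Finset.sum_const, Finset.card_univ, nsmul_eq_mul] at this
    rw [hn2]
    linarith
  have hsum6 : t * (∑ x : α, ((icol K x).card : ℝ))
      + (1 - t) * (∑ x : α, ((upart H K x).card : ℝ))
      ≤ t * (∑ x : α, (((icol K x ∪ nbhd H (icol K x)).card : ℝ))) := by
    have := Finset.sum_le_sum (fun x (_ : x ∈ Finset.univ) => h6 x)
    rw [Finset.sum_add_distrib, ← Finset.mul_sum, ← Finset.mul_sum, ← Finset.mul_sum] at this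
    exact this
  have hsplitsum : (∑ x : α, ((wpart H K x).card : ℝ))
      + (∑ x : α, ((upart H K x).card : ℝ)) = (K.card : ℝ) := by
    rw [← hcardK, ← Finset.sum_add_distrib]
    exact Finset.sum_congr rfl (fun x _ => hsplit x)
  rw [hswapT, hswapP] at hsum3
  rw [hcardK] at hsum6
  set A := ∑ x : α, ((wpart H K x).card : ℝ) with hA
  set B := ∑ x : α, ((upart H K x).card : ℝ) with hB
  set R := ∑ x : α, (((icol K x ∪ nbhd H (icol K x)).card : ℝ)) with hR
  have hmul : t * A + t * B = t * (K.card : ℝ) := by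
    rw [← hsplitsum]; ring
  linarith

theorem stmt2 {α β : Type*} [Fintype α] [Fintype β] [Nonempty α] [Nonempty β]
    (G : SimpleGraph α) (H : SimpleGraph β) :
    iRatio (tensorProd G H) ≤ max (aRatio G) (aRatio H) := by
  classical
  set t := max (aRatio G) (aRatio H) with ht
  have htG : aRatio G ≤ t := le_max_left _ _
  have htH : aRatio H ≤ t := le_max_right _ _
  have ht0 : 0 ≤ t := (aRatio_nonneg' G).trans htG
  -- obtain a maximum independent set
  have hSne : Set.Nonempty {n : ℕ | ∃ U : Finset (α × β),
      IsIndep (tensorProd G H) U ∧ U.card = n} := by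
    refine ⟨0, ∅, ?_, rfl⟩
    intro u hu
    simp at hu
  have hSbdd : BddAbove {n : ℕ | ∃ U : Finset (α × β),
      IsIndep (tensorProd G H) U ∧ U.card = n} := by
    refine ⟨Fintype.card (α × β), ?_⟩
    rintro n ⟨U, -, rfl⟩
    exact (Finset.card_le_univ U).trans_eq Finset.card_univ
  have hmem := Nat.sSup_mem hSne hSbdd
  obtain ⟨K, hK, hKcard⟩ := hmem
  have hb := stmt2_main G H htG htH ht0 K hK
  have hn : (0:ℝ) < (Fintype.card (α × β) : ℝ) := by
    exact_mod_cast Fintype.card_pos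
  rw [iRatio, div_le_iff₀ hn]
  have : (alphaNum (tensorProd G H) : ℝ) = (K.card : ℝ) := by
    rw [alphaNum, ← hKcard]
  rw [this]
  calc (K.card : ℝ) ≤ t * (Fintype.card α : ℝ) * (Fintype.card β : ℝ) := hb
    _ = t * (Fintype.card (α × β) : ℝ) := by
        rw [Fintype.card_prod]; push_cast; ring
end

section
/- For every finite simple graph G with a(G) ≤ 1/2, the second categorical power satisfies a(G^{×2}) = a(G), where a(K) = max{|U|/(|U| + |N_K(U)|) : U a nonempty independent set of K}. -/
open scoped Classical
open Filter

open Finset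

namespace Scratch


variable {α : Type*} [Fintype α] (G : SimpleGraph α)

lemma tensorProd_adj' {β γ : Type*} (G : SimpleGraph β) (H : SimpleGraph γ) {p q : β × γ} :
    (tensorProd G H).Adj p q ↔ G.Adj p.1 q.1 ∧ H.Adj p.2 q.2 := Iff.rfl

lemma mem_nbhd' {U : Finset α} {v : α} : v ∈ nbhd G U ↔ ∃ u ∈ U, G.Adj u v := by
  simp [nbhd]

lemma nbhd_mono' {U V : Finset α} (h : U ⊆ V) : nbhd G U ⊆ nbhd G V := by
  intro v hv
  rw [mem_nbhd'] at hv ⊢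
  obtain ⟨u, hu, ha⟩ := hv
  exact ⟨u, h hu, ha⟩

lemma card_filter_congr {p q : α → Prop} {hp : DecidablePred p} {hq : DecidablePred q}
    (h : ∀ a, p a ↔ q a) :
    (@Finset.filter α p hp univ).card = (@Finset.filter α q hq univ).card := by
  congr 1
  ext a
  simp only [Finset.mem_filter, h a]

lemma expansion_all (b : ℝ)
    (hexp : ∀ U : Finset α, U.Nonempty → IsIndep G U → b * U.card ≤ ((nbhd G U).card : ℝ))
    (T : Finset α) :
    b * ((T \ nbhd G T).card : ℝ) + ((T ∩ nbhd G T).card : ℝ) ≤ ((nbhd G T).card : ℝ) := by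
  set I := T \ nbhd G T with hI
  set D := T ∩ nbhd G T with hD
  have hIind : IsIndep G I := by
    intro u hu v hv hadj
    rw [hI, Finset.mem_sdiff] at hu hv
    exact hv.2 ((mem_nbhd' G).mpr ⟨u, hu.1, hadj⟩)
  have hIN : b * (I.card : ℝ) ≤ ((nbhd G I).card : ℝ) := by
    rcases I.eq_empty_or_nonempty with h | h
    · simp [h]
    · exact hexp I h hIind
  have hdisj : Disjoint (nbhd G I) D := by
    rw [Finset.disjoint_right]
    intro z hzD hzN
    rw [mem_nbhd'] at hzN
    obtain ⟨u, huI, hadj⟩ := hzN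
    rw [hI, Finset.mem_sdiff] at huI
    rw [hD, mem_inter] at hzD
    exact huI.2 ((mem_nbhd' G).mpr ⟨z, hzD.1, hadj.symm⟩)
  have hsub : nbhd G I ∪ D ⊆ nbhd G T := by
    apply Finset.union_subset
    · exact nbhd_mono' G (Finset.sdiff_subset)
    · intro z hz; rw [hD, mem_inter] at hz; exact hz.2
  have hcard : (nbhd G I).card + D.card ≤ (nbhd G T).card := by
    rw [← Finset.card_union_of_disjoint hdisj]
    exact Finset.card_le_card hsub
  have : ((nbhd G I).card : ℝ) + (D.card : ℝ) ≤ ((nbhd G T).card : ℝ) := by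
    exact_mod_cast hcard
  linarith

lemma count_swap (p : α → α → Prop) {h1 : ∀ v, DecidablePred (p v)}
    {h2 : ∀ y, DecidablePred (fun v => p v y)} :
    ∑ v, (@Finset.filter α (p v) (h1 v) univ).card
      = ∑ y, (@Finset.filter α (fun v => p v y) (h2 y) univ).card := by
  simp only [Finset.card_filter]
  rw [Finset.sum_comm]
  exact Finset.sum_congr rfl fun y _ => Finset.sum_congr rfl fun v _ => by congr

lemma pair_count_fst (p : α × α → Prop) {hp : DecidablePred p}
    {h2 : ∀ v, DecidablePred (fun w => p (v, w))} :
    (@Finset.filter _ p hp univ).card = ∑ v, (@Finset.filter α (fun w => p (v, w)) (h2 v) univ).card := by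
  simp only [Finset.card_filter]
  rw [Fintype.sum_prod_type]
  exact Finset.sum_congr rfl fun v _ => Finset.sum_congr rfl fun w _ => by congr

lemma pair_count_snd (p : α × α → Prop) {hp : DecidablePred p}
    {h2 : ∀ y, DecidablePred (fun x => p (x, y))} :
    (@Finset.filter _ p hp univ).card = ∑ y, (@Finset.filter α (fun x => p (x, y)) (h2 y) univ).card := by
  simp only [Finset.card_filter]
  rw [Fintype.sum_prod_type_right]
  exact Finset.sum_congr rfl fun y _ => Finset.sum_congr rfl fun x _ => by congr

lemma master (b : ℝ) (hb : 1 ≤ b)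
    (hexp : ∀ U : Finset α, U.Nonempty → IsIndep G U → b * U.card ≤ ((nbhd G U).card : ℝ))
    (W : Finset (α × α)) (hW : IsIndep (tensorProd G G) W) :
    b * (W.card : ℝ) ≤ ((nbhd (tensorProd G G) W).card : ℝ) := by
  set S : α → Finset α := fun v => univ.filter (fun y => ∃ x, G.Adj v x ∧ (x, y) ∈ W) with hS
  set X : α → Finset α := fun y => univ.filter (fun x => (x, y) ∈ W) with hX
  have hmemS : ∀ v y, y ∈ S v ↔ ∃ x, G.Adj v x ∧ (x, y) ∈ W := by
    intro v y; rw [hS]; simp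
  have hmemX : ∀ y x, x ∈ X y ↔ (x, y) ∈ W := by
    intro y x; rw [hX]; simp
  -- |W| = ∑ y |X y|
  have hcardW : W.card = ∑ y, (X y).card := by
    calc W.card = (univ.filter (fun q : α × α => q ∈ W)).card := by
          rw [Finset.filter_univ_mem]
      _ = ∑ y, (univ.filter (fun x : α => (x, y) ∈ W)).card := pair_count_snd _
      _ = ∑ y, (X y).card := rfl
  -- |N(W)| = ∑ v |N(S v)|
  have hcardN : (nbhd (tensorProd G G) W).card = ∑ v, (nbhd G (S v)).card := by
    calc (nbhd (tensorProd G G) W).card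
        = (univ.filter (fun q : α × α => ∃ u ∈ W, (tensorProd G G).Adj u q)).card := rfl
      _ = ∑ v, (univ.filter (fun w : α => ∃ u ∈ W, (tensorProd G G).Adj u (v, w))).card :=
          pair_count_fst _
      _ = ∑ v, (nbhd G (S v)).card := by
          apply Finset.sum_congr rfl
          intro v _
          have : nbhd G (S v) = univ.filter (fun w => ∃ u ∈ S v, G.Adj u w) := rfl
          rw [this]
          apply card_filter_congr
          intro w
          constructor
          · rintro ⟨p, hp, hpq⟩
            obtain ⟨h1, h2⟩ := (tensorProd_adj' G G).mp hpq
            exact ⟨p.2, (hmemS v p.2).mpr ⟨p.1, h1.symm, hp⟩, h2⟩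
          · rintro ⟨y, hy, hadj⟩
            obtain ⟨x, hvx, hxy⟩ := (hmemS v y).mp hy
            exact ⟨(x, y), hxy, (tensorProd_adj' G G).mpr ⟨hvx.symm, hadj⟩⟩
  -- ∑ v |S v| = ∑ y |N(X y)|
  have hQ : ∑ v, (S v).card = ∑ y, (nbhd G (X y)).card := by
    calc ∑ v, (S v).card
        = ∑ y, (univ.filter (fun v : α => ∃ x, G.Adj v x ∧ (x, y) ∈ W)).card :=
          count_swap (fun v y => ∃ x, G.Adj v x ∧ (x, y) ∈ W)
      _ = ∑ y, (nbhd G (X y)).card := by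
          apply Finset.sum_congr rfl
          intro y _
          have : nbhd G (X y) = univ.filter (fun v => ∃ u ∈ X y, G.Adj u v) := rfl
          rw [this]
          apply card_filter_congr
          intro v
          constructor
          · rintro ⟨x, hadj, hxy⟩
            exact ⟨x, (hmemX y x).mpr hxy, hadj.symm⟩
          · rintro ⟨x, hx, hadj⟩
            exact ⟨x, hadj.symm, (hmemX y x).mp hx⟩
  -- injection: ∑ y |X y ∩ N(X y)| ≤ ∑ v |S v \ N(S v)|
  have hD : ∑ y, (X y ∩ nbhd G (X y)).card ≤ ∑ v, ((S v) \ nbhd G (S v)).card := by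
    have key : ∀ y, (X y ∩ nbhd G (X y)).card
        ≤ (univ.filter (fun v => y ∈ S v ∧ y ∉ nbhd G (S v))).card := by
      intro y
      apply Finset.card_le_card
      intro x hx
      rw [mem_inter] at hx
      obtain ⟨hx1, hx2⟩ := hx
      rw [mem_filter]
      refine ⟨mem_univ x, ?_, ?_⟩
      · rw [mem_nbhd'] at hx2
        obtain ⟨x', hx', hadj⟩ := hx2
        exact (hmemS x y).mpr ⟨x', hadj.symm, (hmemX y x').mp hx'⟩
      · intro hyN
        rw [mem_nbhd'] at hyN
        obtain ⟨y', hy', hadjy⟩ := hyN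
        obtain ⟨x'', hadjx, hxy'⟩ := (hmemS x y').mp hy'
        exact hW (x, y) ((hmemX y x).mp hx1) (x'', y') hxy' ((tensorProd_adj' G G).mpr ⟨hadjx, hadjy.symm⟩)
    calc ∑ y, (X y ∩ nbhd G (X y)).card
        ≤ ∑ y, (univ.filter (fun v => y ∈ S v ∧ y ∉ nbhd G (S v))).card :=
          Finset.sum_le_sum (fun y _ => key y)
      _ = ∑ v, (univ.filter (fun y => y ∈ S v ∧ y ∉ nbhd G (S v))).card :=
          (count_swap (fun v y => y ∈ S v ∧ y ∉ nbhd G (S v))).symm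
      _ = ∑ v, ((S v) \ nbhd G (S v)).card := by
          apply Finset.sum_congr rfl
          intro v _
          congr 1
          ext y
          simp [Finset.mem_sdiff]
  -- split cards
  have hsplit : ∀ T : Finset α,
      (T.card : ℝ) = ((T \ nbhd G T).card : ℝ) + ((T ∩ nbhd G T).card : ℝ) := by
    intro T
    have := Finset.card_inter_add_card_sdiff T (nbhd G T)
    push_cast [← this]
    ring
  -- the chain
  have main : b * (W.card : ℝ) ≤ ∑ v, ((nbhd G (S v)).card : ℝ) := by
    have e1 : ∀ y, b * ((X y).card : ℝ)
        ≤ ((nbhd G (X y)).card : ℝ) + (b - 1) * ((X y ∩ nbhd G (X y)).card : ℝ) := by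
      intro y
      have h := expansion_all G b hexp (X y)
      rw [hsplit (X y)]
      nlinarith [h]
    have e2 : ∀ v, ((S v).card : ℝ) + (b - 1) * (((S v) \ nbhd G (S v)).card : ℝ)
        ≤ ((nbhd G (S v)).card : ℝ) := by
      intro v
      have h := expansion_all G b hexp (S v)
      rw [hsplit (S v)]
      nlinarith [h]
    have hQ' : ∑ v, ((S v).card : ℝ) = ∑ y, ((nbhd G (X y)).card : ℝ) := by
      exact_mod_cast hQ
    have hD' : ∑ y, ((X y ∩ nbhd G (X y)).card : ℝ)
        ≤ ∑ v, (((S v) \ nbhd G (S v)).card : ℝ) := by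
      exact_mod_cast hD
    have hW' : (W.card : ℝ) = ∑ y, ((X y).card : ℝ) := by exact_mod_cast hcardW
    calc b * (W.card : ℝ) = ∑ y, b * ((X y).card : ℝ) := by rw [hW', Finset.mul_sum]
      _ ≤ ∑ y, (((nbhd G (X y)).card : ℝ) + (b - 1) * ((X y ∩ nbhd G (X y)).card : ℝ)) :=
          Finset.sum_le_sum (fun y _ => e1 y)
      _ = ∑ y, ((nbhd G (X y)).card : ℝ) + (b - 1) * ∑ y, ((X y ∩ nbhd G (X y)).card : ℝ) := by
          rw [Finset.sum_add_distrib, Finset.mul_sum]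
      _ ≤ ∑ v, ((S v).card : ℝ) + (b - 1) * ∑ v, (((S v) \ nbhd G (S v)).card : ℝ) := by
          have hb1 : (0:ℝ) ≤ b - 1 := by linarith
          have h2 := mul_le_mul_of_nonneg_left hD' hb1
          linarith [hQ'.ge, h2]
      _ = ∑ v, (((S v).card : ℝ) + (b - 1) * (((S v) \ nbhd G (S v)).card : ℝ)) := by
          rw [Finset.sum_add_distrib, Finset.mul_sum]
      _ ≤ ∑ v, ((nbhd G (S v)).card : ℝ) := Finset.sum_le_sum (fun v _ => e2 v)
  have hfin : ((nbhd (tensorProd G G) W).card : ℝ) = ∑ v, ((nbhd G (S v)).card : ℝ) := by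
    exact_mod_cast hcardN
  linarith [main, hfin.ge]


def ratSetOf {β : Type*} [Fintype β] (K : SimpleGraph β) : Set ℝ :=
  {r : ℝ | ∃ U : Finset β, U.Nonempty ∧ IsIndep K U ∧
    r = (U.card : ℝ) / ((U.card : ℝ) + ((nbhd K U).card : ℝ))}

lemma aRatio_eq {β : Type*} [Fintype β] (K : SimpleGraph β) :
    aRatio K = sSup (ratSetOf K) := rfl

lemma ratSetOf_finite {β : Type*} [Fintype β] (K : SimpleGraph β) : (ratSetOf K).Finite := by
  classical
  have hsub : ratSetOf K ⊆ Set.range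
      (fun U : Finset β => (U.card : ℝ) / ((U.card : ℝ) + ((nbhd K U).card : ℝ))) := by
    rintro r ⟨U, -, -, rfl⟩
    exact ⟨U, rfl⟩
  exact (Set.finite_range _).subset hsub

lemma isIndep_singleton {β : Type*} (K : SimpleGraph β) (y : β) : IsIndep K {y} := by
  intro u hu v hv hadj
  rw [Finset.mem_singleton] at hu hv
  subst hu; subst hv
  exact K.irrefl hadj

lemma ratSetOf_nonempty {β : Type*} [Fintype β] [Nonempty β] (K : SimpleGraph β) :
    (ratSetOf K).Nonempty :=
  ⟨_, ⟨{Classical.arbitrary β}, Finset.singleton_nonempty _, isIndep_singleton K _, rfl⟩⟩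

lemma aRatio_pos {β : Type*} [Fintype β] [Nonempty β] (K : SimpleGraph β) : 0 < aRatio K := by
  set y0 := Classical.arbitrary β
  have hmem : (({y0} : Finset β).card : ℝ)
      / ((({y0} : Finset β).card : ℝ) + ((nbhd K {y0}).card : ℝ)) ∈ ratSetOf K :=
    ⟨{y0}, Finset.singleton_nonempty _, isIndep_singleton K _, rfl⟩
  have hpos : 0 < (({y0} : Finset β).card : ℝ)
      / ((({y0} : Finset β).card : ℝ) + ((nbhd K {y0}).card : ℝ)) := by
    apply div_pos
    · simp
    · have h0 : (0:ℝ) ≤ ((nbhd K {y0}).card : ℝ) := Nat.cast_nonneg _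
      have h1 : (0:ℝ) < (({y0} : Finset β).card : ℝ) := by simp
      linarith
  rw [aRatio_eq]
  exact lt_of_lt_of_le hpos (le_csSup (ratSetOf_finite K).bddAbove hmem)


end Scratch

theorem stmt5 {α : Type*} [Fintype α] [Nonempty α] (G : SimpleGraph α)
    (h : aRatio G ≤ 1/2) :
    aRatio (tensorProd G G) = aRatio G := by
  classical
  haveI : Nonempty (α × α) := ⟨(Classical.arbitrary α, Classical.arbitrary α)⟩
  set a := aRatio G with hadef
  have hapos : 0 < a := Scratch.aRatio_pos G
  have hbddG := (Scratch.ratSetOf_finite G).bddAbove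
  have hbddGG := (Scratch.ratSetOf_finite (tensorProd G G)).bddAbove
  have hneG : (Scratch.ratSetOf G).Nonempty := Scratch.ratSetOf_nonempty G
  have hneGG : (Scratch.ratSetOf (tensorProd G G)).Nonempty :=
    Scratch.ratSetOf_nonempty (tensorProd G G)
  have hUB : ∀ (U : Finset α), U.Nonempty → IsIndep G U →
      (U.card : ℝ) / ((U.card : ℝ) + ((nbhd G U).card : ℝ)) ≤ a := by
    intro U h1 h2
    have := le_csSup hbddG (show _ ∈ Scratch.ratSetOf G from ⟨U, h1, h2, rfl⟩)
    rwa [← Scratch.aRatio_eq] at this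
  set b : ℝ := (1 - a) / a with hbdef
  have hb1 : 1 ≤ b := by
    rw [hbdef, le_div_iff₀ hapos]
    linarith
  have hexp : ∀ (U : Finset α), U.Nonempty → IsIndep G U →
      b * U.card ≤ ((nbhd G U).card : ℝ) := by
    intro U h1 h2
    have h3 := hUB U h1 h2
    have hu : (0:ℝ) < (U.card : ℝ) := by exact_mod_cast Finset.card_pos.mpr h1
    have hm : (0:ℝ) ≤ ((nbhd G U).card : ℝ) := Nat.cast_nonneg _
    have hden : (0:ℝ) < (U.card : ℝ) + ((nbhd G U).card : ℝ) := by linarith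
    rw [div_le_iff₀ hden] at h3
    rw [hbdef, div_mul_eq_mul_div, div_le_iff₀ hapos]
    nlinarith
  have hniso : ∀ w : α, ∃ u : α, G.Adj u w := by
    intro w
    by_contra hc
    push_neg at hc
    have hnb : nbhd G {w} = ∅ := by
      ext z
      simp only [Scratch.mem_nbhd', Finset.mem_singleton, Finset.notMem_empty, iff_false,
        not_exists, not_and]
      rintro u rfl hadj
      exact hc z hadj.symm
    have h4 := hUB {w} (Finset.singleton_nonempty w) (Scratch.isIndep_singleton G w)
    rw [hnb] at h4
    simp at h4
    linarith
  have hge : a ≤ aRatio (tensorProd G G) := by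
    rw [Scratch.aRatio_eq (tensorProd G G), hadef, Scratch.aRatio_eq G]
    apply csSup_le hneG
    rintro r ⟨U, hUne, hUind, rfl⟩
    apply le_csSup hbddGG
    refine ⟨U ×ˢ (univ : Finset α), hUne.product ⟨Classical.arbitrary α, mem_univ _⟩, ?_, ?_⟩
    · intro p hp q hq hadj
      rw [Finset.mem_product] at hp hq
      exact hUind p.1 hp.1 q.1 hq.1 ((Scratch.tensorProd_adj' G G).mp hadj).1
    · have hprodnbhd : nbhd (tensorProd G G) (U ×ˢ (univ : Finset α))
          = (nbhd G U) ×ˢ (univ : Finset α) := by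
        ext q
        rw [Scratch.mem_nbhd', Finset.mem_product, Scratch.mem_nbhd']
        constructor
        · rintro ⟨p, hp, hpq⟩
          obtain ⟨h1, h2⟩ := (Scratch.tensorProd_adj' G G).mp hpq
          rw [Finset.mem_product] at hp
          exact ⟨⟨p.1, hp.1, h1⟩, mem_univ _⟩
        · rintro ⟨⟨u, hu, hadj⟩, -⟩
          obtain ⟨z, hz⟩ := hniso q.2
          exact ⟨(u, z), Finset.mem_product.mpr ⟨hu, mem_univ _⟩, (Scratch.tensorProd_adj' G G).mpr ⟨hadj, hz⟩⟩
      rw [hprodnbhd, Finset.card_product, Finset.card_product, Finset.card_univ]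
      have hn : (0:ℝ) < (Fintype.card α : ℝ) := by exact_mod_cast Fintype.card_pos
      push_cast
      rw [show (U.card : ℝ) * (Fintype.card α : ℝ) + ((nbhd G U).card : ℝ) * (Fintype.card α : ℝ)
          = ((U.card : ℝ) + ((nbhd G U).card : ℝ)) * (Fintype.card α : ℝ) from by ring,
        mul_div_mul_right _ _ hn.ne']
  have hle : aRatio (tensorProd G G) ≤ a := by
    rw [Scratch.aRatio_eq (tensorProd G G)]
    apply csSup_le hneGG
    rintro r ⟨W, hWne, hWind, rfl⟩
    have hmast := Scratch.master G b hb1 hexp W hWind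
    have hw : (0:ℝ) < (W.card : ℝ) := by exact_mod_cast Finset.card_pos.mpr hWne
    have hmm : (0:ℝ) ≤ ((nbhd (tensorProd G G) W).card : ℝ) := Nat.cast_nonneg _
    have hden : (0:ℝ) < (W.card : ℝ) + ((nbhd (tensorProd G G) W).card : ℝ) := by linarith
    rw [div_le_iff₀ hden]
    rw [hbdef, div_mul_eq_mul_div, div_le_iff₀ hapos] at hmast
    nlinarith
  exact le_antisymm hle hge
end

section
/- For every nonempty finite simple graph G, if a(G) > 1/2 then A(G) = 1, where a(G) = max{|U|/(|U|+|N_G(U)|) : U a nonempty independent set} and A(G) = lim_{k→∞} α(G^{×k})/|V(G)|^k. -/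
open scoped Classical
open Filter

noncomputable def cnt {α : Type*} {k : ℕ} (W : Finset α) (x : Fin k → α) : ℕ :=
  (Finset.univ.filter fun i => x i ∈ W).card

lemma cnt_le_cnt_nbhd {α : Type*} [Fintype α] (G : SimpleGraph α) (U : Finset α) {k : ℕ}
    (z w : Fin k → α) (hzw : ∀ i, G.Adj (z i) (w i)) : cnt U z ≤ cnt (nbhd G U) w := by
  apply Finset.card_le_card
  intro i hi
  simp only [Finset.mem_filter, Finset.mem_univ, true_and, nbhd] at *
  exact ⟨z i, hi, hzw i⟩

lemma indep_majority {α : Type*} [Fintype α] (G : SimpleGraph α) (U : Finset α) (k : ℕ) :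
    IsIndep (tensorPow G k)
      (Finset.univ.filter fun x : Fin k → α => cnt (nbhd G U) x < cnt U x) := by
  intro x hx y hy hadj
  simp only [Finset.mem_filter, Finset.mem_univ, true_and] at hx hy
  obtain ⟨-, hadj2⟩ := hadj
  have h1 := cnt_le_cnt_nbhd G U x y hadj2
  have h2 := cnt_le_cnt_nbhd G U y x (fun i => (hadj2 i).symm)
  omega

-- disjointness of U and nbhd when U independent
lemma disj_nbhd {α : Type*} [Fintype α] (G : SimpleGraph α) (U : Finset α) (hU : IsIndep G U) :
    Disjoint U (nbhd G U) := by
  rw [Finset.disjoint_left]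
  intro v hv hv'
  simp only [nbhd, Finset.mem_filter, Finset.mem_univ, true_and] at hv'
  obtain ⟨u, hu, huv⟩ := hv'
  exact hU u hu v hv huv

lemma cnt_univ_card {α : Type*} [Fintype α] {k : ℕ} (N : Finset α) (P : α → Prop)
    [DecidablePred P] (hP : ∀ v, P v ↔ v ∈ N) (x : Fin k → α) :
    (Finset.univ.filter fun i => P (x i)).card = cnt N x := by
  unfold cnt
  congr 1
  apply Finset.filter_congr
  intro i _
  simp [hP]

set_option maxHeartbeats 1000000 in
lemma bad_bound {α : Type*} [Fintype α] (U N : Finset α) (hdisj : Disjoint U N)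
    (hu : 0 < U.card) (hw : N.card < U.card) :
    ∃ C : ℝ, 0 ≤ C ∧ C < Fintype.card α ∧ ∀ k : ℕ,
      ((Finset.univ.filter fun x : Fin k → α => ¬ (cnt N x < cnt U x)).card : ℝ) ≤ C ^ k := by
  set u : ℝ := (U.card : ℝ) with hu_def
  set w : ℝ := (N.card : ℝ) with hw_def
  set t : ℝ := (u + w) / 2 with ht_def
  have hupos : 0 < u := by rw [hu_def]; exact_mod_cast hu
  have hwnn : 0 ≤ w := by positivity
  have hwu : w < u := by rw [hu_def, hw_def]; exact_mod_cast hw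
  have htpos : 0 < t := by rw [ht_def]; linarith
  have hun : (U ∪ N).card = U.card + N.card := Finset.card_union_of_disjoint hdisj
  have hct : U.card + N.card ≤ Fintype.card α := by
    rw [← hun]
    simpa [Finset.card_univ] using Finset.card_le_univ (U ∪ N)
  have hle : u + w ≤ (Fintype.card α : ℝ) := by
    rw [hu_def, hw_def]
    exact_mod_cast hct
  set m : ℝ := (Fintype.card α : ℝ) - u - w with hm_def
  have hmnn : 0 ≤ m := by linarith
  refine ⟨t + u * w / t + m, by positivity, ?_, ?_⟩
  · have h1 : u * w / t < u + w - t := by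
      rw [div_lt_iff₀ htpos]
      nlinarith [sq_nonneg (u - w)]
    rw [hm_def]; linarith
  intro k
  set g : α → ℝ := fun v => if v ∈ U then t / u else if v ∈ N then u / t else 1 with hg_def
  have hg_nonneg : ∀ v, 0 ≤ g v := by
    intro v
    rw [hg_def]
    dsimp only
    split_ifs <;> positivity
  have hNU : ∀ v : α, (v ∉ U ∧ v ∈ N) ↔ v ∈ N := by
    intro v
    constructor
    · exact fun h => h.2
    · exact fun h => ⟨fun hU => Finset.disjoint_left.mp hdisj hU h, h⟩
  -- product formula
  have hprod : ∀ x : Fin k → α, ∏ i, g (x i) = (t/u)^(cnt U x) * (u/t)^(cnt N x) := by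
    intro x
    have hA : (Finset.univ.filter fun i => x i ∈ U).card = cnt U x :=
      cnt_univ_card U (· ∈ U) (fun _ => Iff.rfl) x
    have hB : (Finset.univ.filter fun i => x i ∉ U ∧ x i ∈ N).card = cnt N x :=
      cnt_univ_card N (fun v => v ∉ U ∧ v ∈ N) hNU x
    rw [hg_def]
    dsimp only
    rw [Finset.prod_ite, Finset.prod_ite, Finset.prod_const, Finset.prod_const,
      Finset.prod_const, one_pow, mul_one, Finset.filter_filter, hA, hB]
  -- sum formula
  have hsum : ∑ v, g v = t + u * w / t + m := by
    rw [hg_def]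
    dsimp only
    rw [Finset.sum_ite, Finset.sum_ite, Finset.sum_const, Finset.sum_const,
      Finset.sum_const, Finset.filter_filter]
    have e1 : (Finset.univ.filter fun v => v ∈ U) = U := by
      ext v; simp
    have e2 : (Finset.univ.filter fun v => ¬ v ∈ U ∧ v ∈ N) = N := by
      ext v
      simpa using hNU v
    have e3 : ((Finset.univ.filter fun v => ¬ v ∈ U).filter fun v => ¬ v ∈ N).card
        = Fintype.card α - U.card - N.card := by
      rw [Finset.filter_filter]
      have hcompl : (Finset.univ.filter fun v => ¬ v ∈ U ∧ ¬ v ∈ N) = (U ∪ N)ᶜ := by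
        ext v; simp [not_or]
      rw [hcompl, Finset.card_compl, hun]
      omega
    rw [e1, e2, e3, nsmul_eq_mul, nsmul_eq_mul, nsmul_eq_mul, mul_one]
    have e4 : ((Fintype.card α - U.card - N.card : ℕ) : ℝ) = m := by
      rw [hm_def, hu_def, hw_def, Nat.cast_sub (by omega), Nat.cast_sub (by omega)]
    rw [e4, ← hu_def, ← hw_def]
    have h5 : u * (t / u) = t := by
      rw [mul_comm, div_mul_cancel₀ _ (ne_of_gt hupos)]
    have h6 : w * (u / t) = u * w / t := by ring
    linarith
  -- bad elements have product ≥ 1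
  have hbad1 : ∀ x : Fin k → α, cnt U x ≤ cnt N x → (1:ℝ) ≤ ∏ i, g (x i) := by
    intro x hx
    rw [hprod x]
    have hb : cnt N x = cnt U x + (cnt N x - cnt U x) := by omega
    rw [hb, pow_add, ← mul_assoc, ← mul_pow]
    have hone : t / u * (u / t) = 1 := by field_simp
    rw [hone, one_pow, one_mul]
    apply one_le_pow₀
    rw [le_div_iff₀ htpos]
    linarith
  -- total sum
  have htotal : ∑ x : Fin k → α, ∏ i, g (x i) = (∑ v, g v) ^ k := by
    have hpc : (∑ v, g v) ^ k = ∏ _i : Fin k, (∑ v, g v) := by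
      rw [Finset.prod_const, Finset.card_univ, Fintype.card_fin]
    rw [hpc, Finset.prod_univ_sum, Fintype.piFinset_univ]
  calc ((Finset.univ.filter fun x : Fin k → α => ¬ (cnt N x < cnt U x)).card : ℝ)
      = ∑ _x ∈ (Finset.univ.filter fun x : Fin k → α => ¬ (cnt N x < cnt U x)), (1:ℝ) := by
        rw [Finset.sum_const, nsmul_eq_mul, mul_one]
    _ ≤ ∑ x ∈ (Finset.univ.filter fun x : Fin k → α => ¬ (cnt N x < cnt U x)), ∏ i, g (x i) := by
        apply Finset.sum_le_sum
        intro x hx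
        simp only [Finset.mem_filter, not_lt] at hx
        exact hbad1 x hx.2
    _ ≤ ∑ x : Fin k → α, ∏ i, g (x i) := by
        apply Finset.sum_le_sum_of_subset_of_nonneg (Finset.filter_subset _ _)
        intro x _ _
        exact Finset.prod_nonneg fun i _ => hg_nonneg (x i)
    _ = (t + u * w / t + m) ^ k := by rw [htotal, hsum]

theorem stmt12 {α : Type*} [Fintype α] [Nonempty α] (G : SimpleGraph α)
    (h : 1/2 < aRatio G) :
    Tendsto (fun k : ℕ => iRatio (tensorPow G (k + 1))) atTop (nhds 1) := by
  classical
  set n : ℕ := Fintype.card α with hn_def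
  have hnpos : 0 < n := Fintype.card_pos
  have hnR : (0:ℝ) < n := by exact_mod_cast hnpos
  -- extract a witness U with |N(U)| < |U|
  obtain ⟨U, hUne, hUind, hUN⟩ :
      ∃ U : Finset α, U.Nonempty ∧ IsIndep G U ∧ (nbhd G U).card < U.card := by
    by_contra hc
    push_neg at hc
    have hub : ∀ r ∈ {r : ℝ | ∃ U : Finset α, U.Nonempty ∧ IsIndep G U ∧
        r = (U.card : ℝ) / ((U.card : ℝ) + ((nbhd G U).card : ℝ))}, r ≤ 1/2 := by
      rintro r ⟨U, hne, hind, rfl⟩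
      have h1 : U.card ≤ (nbhd G U).card := hc U hne hind
      have h2 : (1:ℝ) ≤ U.card := by
        exact_mod_cast Finset.card_pos.mpr hne
      have h3 : (U.card : ℝ) ≤ ((nbhd G U).card : ℝ) := by exact_mod_cast h1
      rw [div_le_iff₀ (by linarith)]
      linarith
    have hsup : aRatio G ≤ 1/2 := by
      apply csSup_le
      · obtain ⟨a⟩ := ‹Nonempty α›
        refine ⟨_, {a}, Finset.singleton_nonempty a, ?_, rfl⟩
        intro u hu v hv
        simp only [Finset.mem_singleton] at hu hv
        subst hu; subst hv
        exact fun hadj => G.irrefl hadj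
      · exact hub
    linarith
  obtain ⟨C, hC0, hCn, hCk⟩ := bad_bound U (nbhd G U) (disj_nbhd G U hUind)
    (Finset.card_pos.mpr hUne) hUN
  -- bounds on iRatio
  have hcard : ∀ k : ℕ, Fintype.card (Fin k → α) = n ^ k := by
    intro k
    rw [Fintype.card_fun, Fintype.card_fin, hn_def]
  have hup : ∀ k : ℕ, iRatio (tensorPow G k) ≤ 1 := by
    intro k
    have halpha : alphaNum (tensorPow G k) ≤ Fintype.card (Fin k → α) := by
      apply csSup_le
      · exact ⟨0, ∅, fun u hu => absurd hu (Finset.notMem_empty u), Finset.card_empty⟩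
      · rintro b ⟨V, -, rfl⟩
        simpa using Finset.card_le_univ V
    rw [iRatio, div_le_one (by rw [hcard k]; positivity)]
    exact_mod_cast halpha
  have hlow : ∀ k : ℕ, 1 - (C / n) ^ k ≤ iRatio (tensorPow G k) := by
    intro k
    set good := Finset.univ.filter fun x : Fin k → α => cnt (nbhd G U) x < cnt U x with hgood
    set bad := Finset.univ.filter fun x : Fin k → α => ¬ (cnt (nbhd G U) x < cnt U x) with hbad
    have hsplit : good.card + bad.card = n ^ k := by
      rw [hgood, hbad, Finset.card_filter_add_card_filter_not, Finset.card_univ,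
        hcard k]
    have halpha : (good.card : ℝ) ≤ alphaNum (tensorPow G k) := by
      have hmem : good.card ∈ {m : ℕ | ∃ V : Finset (Fin k → α),
          IsIndep (tensorPow G k) V ∧ V.card = m} :=
        ⟨good, indep_majority G U k, rfl⟩
      have hbdd : BddAbove {m : ℕ | ∃ V : Finset (Fin k → α),
          IsIndep (tensorPow G k) V ∧ V.card = m} := by
        refine ⟨Fintype.card (Fin k → α), ?_⟩
        rintro b ⟨V, -, rfl⟩
        simpa using Finset.card_le_univ V
      exact_mod_cast le_csSup hbdd hmem
    have hgc : ((n:ℝ)) ^ k - C ^ k ≤ (good.card : ℝ) := by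
      have h2 : (good.card : ℝ) + (bad.card : ℝ) = (n:ℝ) ^ k := by exact_mod_cast hsplit
      have h3 := hCk k
      rw [← hbad] at h3
      linarith
    rw [iRatio, hcard k]
    have hpow : (0:ℝ) < (n:ℝ) ^ k := by positivity
    have he : 1 - (C / (n:ℝ)) ^ k = ((n:ℝ)^k - C^k) / (n:ℝ)^k := by
      rw [div_pow, sub_div, div_self (ne_of_gt hpow)]
    rw [he]
    push_cast
    exact (div_le_div_iff_of_pos_right hpow).mpr (by linarith)
  -- squeeze
  have hc1 : C / (n:ℝ) < 1 := by
    rw [div_lt_one hnR]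
    rw [hn_def]
    exact hCn
  have hc0 : 0 ≤ C / (n:ℝ) := by positivity
  have h0 : Tendsto (fun k : ℕ => (C/(n:ℝ))^(k+1)) atTop (nhds 0) := by
    exact (tendsto_pow_atTop_nhds_zero_of_lt_one hc0 hc1).comp (tendsto_add_atTop_nat 1)
  have hlim : Tendsto (fun k : ℕ => 1 - (C/(n:ℝ))^(k+1)) atTop (nhds 1) := by
    simpa using tendsto_const_nhds.sub h0
  exact tendsto_of_tendsto_of_tendsto_of_le_of_le hlim tendsto_const_nhds
    (fun k => hlow (k+1)) (fun k => hup (k+1))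
end
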